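/- arXiv:1403.7683 — 2 statements merged into one kernel-verified Lean document; each statement's English description precedes it below -/
import Mathlib

section
/- Let c₁ > 0 and c₂ > 0 be real constants, let 0 < ε < 1, let t > 0 be real, and let r₁, r₂ be nonnegative integers. Define γ := ε + c₂ · (r₁ + r₂) / (c₁ · ε · t). Then c₂^{r₁ + r₂} · exp(−c₁ · t · γ · min(γ, 1)) ≤ exp(−c₁ · t · min(ε, ε²)). -/
open MeasureTheory ProbabilityTheory Matrix

noncomputable def spec {n d : ℕ} (A : Matrix (Fin n) (Fin d) ℝ) : ℝ :=
  ‖LinearMap.toContinuousLinearMap (Matrix.toEuclideanLin A)‖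

noncomputable def frob {n d : ℕ} (A : Matrix (Fin n) (Fin d) ℝ) : ℝ :=
  Real.sqrt (∑ i, ∑ j, (A i j) ^ 2)

noncomputable def svals {n d : ℕ} (A : Matrix (Fin n) (Fin d) ℝ) : Fin d → ℝ :=
  fun i => Real.sqrt ((Matrix.isHermitian_conjTranspose_mul_self A).eigenvalues i)

noncomputable def nuclearNorm {n d : ℕ} (A : Matrix (Fin n) (Fin d) ℝ) : ℝ :=
  ∑ i, svals A i

noncomputable def nuclearRank {n d : ℕ} (A : Matrix (Fin n) (Fin d) ℝ) : ℝ :=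
  nuclearNorm A / spec A

noncomputable def gaussianMatrix (t d : ℕ) : Measure (Fin t → Fin d → ℝ) :=
  Measure.pi fun _ => Measure.pi fun _ => gaussianReal 0 (t : NNReal)⁻¹

/-- The elementary inequality underlying Lemma 3 of the paper:
the rank-dependent tail bound with γ = ε + c₂(r₁+r₂)/(c₁ ε t) is always
at most exp(−c₁ t min(ε, ε²)). -/
theorem rank_tail_bound_absorb (c₁ c₂ ε t : ℝ) (hc₁ : 0 < c₁) (hc₂ : 0 < c₂)
    (hε : 0 < ε) (hε1 : ε < 1) (ht : 0 < t) (r₁ r₂ : ℕ) :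
    c₂ ^ (r₁ + r₂) *
        Real.exp (-(c₁ * t * (ε + c₂ * ((r₁ : ℝ) + (r₂ : ℝ)) / (c₁ * ε * t)) *
          min (ε + c₂ * ((r₁ : ℝ) + (r₂ : ℝ)) / (c₁ * ε * t)) 1))
      ≤ Real.exp (-(c₁ * t * min ε (ε ^ 2))) := by
  set R : ℝ := (r₁ : ℝ) + (r₂ : ℝ) with hRdef
  have hR : 0 ≤ R := by positivity
  set δ : ℝ := c₂ * R / (c₁ * ε * t) with hδdef
  have hδ : 0 ≤ δ := by positivity
  have hmul : c₁ * t * δ * ε = c₂ * R := by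
    rw [hδdef]
    field_simp
  have hmin : min ε (ε ^ 2) = ε ^ 2 := by
    rw [min_eq_right]
    nlinarith
  rw [hmin]
  -- key inequality
  have key : c₁ * t * ε ^ 2 + c₂ * R ≤ c₁ * t * (ε + δ) * min (ε + δ) 1 := by
    rcases le_or_gt 1 (ε + δ) with hγ | hγ
    · rw [min_eq_right hγ]
      nlinarith [mul_nonneg (mul_nonneg (mul_nonneg hc₁.le ht.le) hδ) (by linarith : (0:ℝ) ≤ 1 - ε),
        mul_nonneg (mul_nonneg (mul_nonneg hc₁.le ht.le) hε.le) (by linarith : (0:ℝ) ≤ 1 - ε)]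
    · rw [min_eq_left hγ.le]
      nlinarith [mul_nonneg (mul_nonneg (mul_nonneg hc₁.le ht.le) hδ) hδ]
  -- bound c₂ ^ (r₁+r₂) by exp (c₂ * R)
  have hpow : c₂ ^ (r₁ + r₂) ≤ Real.exp (c₂ * R) := by
    have h1 : c₂ ≤ Real.exp c₂ := by
      have := Real.add_one_le_exp c₂; linarith
    calc c₂ ^ (r₁ + r₂) ≤ (Real.exp c₂) ^ (r₁ + r₂) :=
          pow_le_pow_left₀ hc₂.le h1 _
      _ = Real.exp (c₂ * R) := by
          rw [← Real.exp_nat_mul]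
          congr 1
          push_cast [hRdef]
          ring
  calc c₂ ^ (r₁ + r₂) * Real.exp (-(c₁ * t * (ε + δ) * min (ε + δ) 1))
      ≤ Real.exp (c₂ * R) * Real.exp (-(c₁ * t * (ε + δ) * min (ε + δ) 1)) := by
        apply mul_le_mul_of_nonneg_right hpow (Real.exp_nonneg _)
    _ = Real.exp (c₂ * R - c₁ * t * (ε + δ) * min (ε + δ) 1) := by
        rw [← Real.exp_add]; ring_nf
    _ ≤ Real.exp (-(c₁ * t * ε ^ 2)) := by
        apply Real.exp_le_exp.2
        linarith
end

section
/- Let ε > 0, c > 0 and t > 0 be reals, let L, S be positive integers, and let X₁, …, X_L ∈ ℝ^{n×d}, Y₁, …, Y_S ∈ ℝ^{d×m} be matrices satisfying ‖X_l‖ ≤ e^{−l+1} for all 1 ≤ l ≤ L and ‖Y_s‖ ≤ e^{−s+1} for all 1 ≤ s ≤ S. Set X := Σ_{l=1}^{L} X_l and Y := Σ_{s=1}^{S} Y_s, and let M ∈ ℝ^{d×d} be any matrix such that for all l, s: ‖X_l M Y_s‖ ≤ (ε + c · (rank(X_l) + rank(Y_s)) / t) · ‖X_l‖ · ‖Y_s‖.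 Then ‖X M Y‖ ≤ ε · e²/(e−1)² + (c · e / ((e−1) · t)) · ( Σ_{l=1}^{L} rank(X_l) · ‖X_l‖ + Σ_{s=1}^{S} rank(Y_s) · ‖Y_s‖ ). -/
open MeasureTheory ProbabilityTheory Matrix

lemma spec_nonneg {n d : ℕ} (A : Matrix (Fin n) (Fin d) ℝ) : 0 ≤ spec A :=
  norm_nonneg _

lemma spec_apply_le {n d : ℕ} (A : Matrix (Fin n) (Fin d) ℝ)
    (x : EuclideanSpace ℝ (Fin d)) :
    ‖Matrix.toEuclideanLin A x‖ ≤ spec A * ‖x‖ := by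
  have := (LinearMap.toContinuousLinearMap (Matrix.toEuclideanLin A)).le_opNorm x
  simpa [spec] using this

lemma spec_mul_le {n d m : ℕ} (A : Matrix (Fin n) (Fin d) ℝ)
    (B : Matrix (Fin d) (Fin m) ℝ) : spec (A * B) ≤ spec A * spec B := by
  rw [spec]
  apply ContinuousLinearMap.opNorm_le_bound _ (mul_nonneg (spec_nonneg A) (spec_nonneg B))
  intro x
  have hcomp : Matrix.toEuclideanLin (A * B) x =
      Matrix.toEuclideanLin A (Matrix.toEuclideanLin B x) := by
    simp [Matrix.toEuclideanLin_apply, Matrix.mulVec_mulVec]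
  calc ‖(LinearMap.toContinuousLinearMap (Matrix.toEuclideanLin (A * B))) x‖
      = ‖Matrix.toEuclideanLin A (Matrix.toEuclideanLin B x)‖ := by
        simp [hcomp]
    _ ≤ spec A * ‖Matrix.toEuclideanLin B x‖ := spec_apply_le _ _
    _ ≤ spec A * (spec B * ‖x‖) := by
        exact mul_le_mul_of_nonneg_left (spec_apply_le _ _) (spec_nonneg A)
    _ = spec A * spec B * ‖x‖ := by ring

lemma spec_sum_le {n d : ℕ} {ι : Type*} (s : Finset ι)
    (f : ι → Matrix (Fin n) (Fin d) ℝ) :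
    spec (∑ i ∈ s, f i) ≤ ∑ i ∈ s, spec (f i) := by
  unfold spec
  rw [map_sum, map_sum]
  exact norm_sum_le _ _

lemma geom_aux (r : ℝ) (h0 : 0 ≤ r) (h1 : r < 1) (N : ℕ) :
    ∑ i ∈ Finset.range N, r ^ i ≤ 1 / (1 - r) := by
  have hpos : 0 < 1 - r := by linarith
  rw [le_div_iff₀ hpos]
  have hg := geom_sum_mul r N
  nlinarith [pow_nonneg h0 N]

/-- The deterministic chain of inequalities (result_3) in the paper: summing the
level-set pieces and using the geometric series ∑_{i≥1} e^{−i+1} = e/(e−1). -/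
theorem level_set_decomposition_bound (n d m L S : ℕ) (hL : 0 < L) (hS : 0 < S)
    (ε c t : ℝ) (hε : 0 < ε) (hc : 0 < c) (ht : 0 < t)
    (X : Fin L → Matrix (Fin n) (Fin d) ℝ) (Y : Fin S → Matrix (Fin d) (Fin m) ℝ)
    (hX : ∀ l : Fin L, spec (X l) ≤ Real.exp (-((l : ℝ) + 1) + 1))
    (hY : ∀ s : Fin S, spec (Y s) ≤ Real.exp (-((s : ℝ) + 1) + 1))
    (M : Matrix (Fin d) (Fin d) ℝ)
    (hM : ∀ (l : Fin L) (s : Fin S),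
      spec (X l * M * Y s) ≤
        (ε + c * (((X l).rank : ℝ) + ((Y s).rank : ℝ)) / t) * spec (X l) * spec (Y s)) :
    spec ((∑ l, X l) * M * (∑ s, Y s)) ≤
      ε * Real.exp 1 ^ 2 / (Real.exp 1 - 1) ^ 2 +
        c * Real.exp 1 / ((Real.exp 1 - 1) * t) *
          ((∑ l, ((X l).rank : ℝ) * spec (X l)) +
            ∑ s, ((Y s).rank : ℝ) * spec (Y s)) := by
  set e := Real.exp 1 with he_def
  have he1 : (1 : ℝ) < e := by
    have := Real.exp_one_gt_d9; rw [he_def]; linarith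
  have he0 : (0 : ℝ) < e := by linarith
  have hem1 : (0 : ℝ) < e - 1 := by linarith
  set K : ℝ := e / (e - 1) with hK_def
  have hK0 : 0 < K := div_pos he0 hem1
  set a : Fin L → ℝ := fun l => spec (X l) with ha_def
  set b : Fin S → ℝ := fun s => spec (Y s) with hb_def
  set A : ℝ := ∑ l, a l with hA_def
  set B : ℝ := ∑ s, b s with hB_def
  set RA : ℝ := ∑ l, ((X l).rank : ℝ) * a l with hRA_def
  set RB : ℝ := ∑ s, ((Y s).rank : ℝ) * b s with hRB_def
  have ha0 : ∀ l, 0 ≤ a l := fun l => spec_nonneg _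
  have hb0 : ∀ s, 0 ≤ b s := fun s => spec_nonneg _
  have hA0 : 0 ≤ A := Finset.sum_nonneg fun l _ => ha0 l
  have hB0 : 0 ≤ B := Finset.sum_nonneg fun s _ => hb0 s
  have hRA0 : 0 ≤ RA := Finset.sum_nonneg fun l _ =>
    mul_nonneg (Nat.cast_nonneg _) (ha0 l)
  have hRB0 : 0 ≤ RB := Finset.sum_nonneg fun s _ =>
    mul_nonneg (Nat.cast_nonneg _) (hb0 s)
  -- geometric bounds
  have hr0 : (0 : ℝ) ≤ Real.exp (-1) := (Real.exp_pos _).le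
  have hr1 : Real.exp (-1) < 1 := by
    rw [Real.exp_lt_one_iff]; norm_num
  have hKeq : 1 / (1 - Real.exp (-1)) = K := by
    rw [hK_def, Real.exp_neg, ← he_def]
    have h1 : (1 : ℝ) - e⁻¹ ≠ 0 := by
      have : e⁻¹ < 1 := inv_lt_one_of_one_lt₀ he1
      linarith
    rw [div_eq_div_iff h1 hem1.ne']
    field_simp
  have geomBound : ∀ (N : ℕ) (g : Fin N → ℝ), (∀ i, 0 ≤ g i) →
      (∀ i : Fin N, g i ≤ Real.exp (-((i : ℝ) + 1) + 1)) → (∑ i, g i) ≤ K := by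
    intro N g hg0 hg
    have h1 : (∑ i, g i) ≤ ∑ i : Fin N, Real.exp (-1) ^ (i : ℕ) := by
      apply Finset.sum_le_sum
      intro i _
      have := hg i
      have heq : Real.exp (-((i : ℝ) + 1) + 1) = Real.exp (-1) ^ (i : ℕ) := by
        rw [← Real.exp_nat_mul]
        ring_nf
      linarith [heq ▸ this]
    have h2 : ∑ i : Fin N, Real.exp (-1) ^ (i : ℕ)
        = ∑ i ∈ Finset.range N, Real.exp (-1) ^ i := Fin.sum_univ_eq_sum_range _ _
    have h3 := geom_aux (Real.exp (-1)) hr0 hr1 N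
    rw [h2] at h1
    calc (∑ i, g i) ≤ 1 / (1 - Real.exp (-1)) := h1.trans h3
      _ = K := hKeq
  have hA : A ≤ K := geomBound L a ha0 hX
  have hB : B ≤ K := geomBound S b hb0 hY
  -- main decomposition
  have hdecomp : (∑ l, X l) * M * (∑ s, Y s) = ∑ l, ∑ s, X l * M * Y s := by
    rw [Matrix.sum_mul, Matrix.sum_mul]
    exact Finset.sum_congr rfl fun l _ => Matrix.mul_sum _ _ _
  have step1 : spec ((∑ l, X l) * M * (∑ s, Y s)) ≤ ∑ l, ∑ s, spec (X l * M * Y s) := by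
    rw [hdecomp]
    refine (spec_sum_le _ _).trans (Finset.sum_le_sum fun l _ => spec_sum_le _ _)
  have step2 : (∑ l, ∑ s, spec (X l * M * Y s)) ≤
      ∑ l, ∑ s, (ε + c * (((X l).rank : ℝ) + ((Y s).rank : ℝ)) / t) * a l * b s :=
    Finset.sum_le_sum fun l _ => Finset.sum_le_sum fun s _ => hM l s
  have key : (∑ l, ∑ s, (ε + c * (((X l).rank : ℝ) + ((Y s).rank : ℝ)) / t) * a l * b s)
      = ε * (A * B) + c / t * (RA * B) + c / t * (A * RB) := by
    rw [hA_def, hB_def, hRA_def, hRB_def,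
      Finset.sum_mul_sum, Finset.sum_mul_sum, Finset.sum_mul_sum]
    simp only [Finset.mul_sum, ← Finset.sum_add_distrib]
    refine Finset.sum_congr rfl fun l _ => Finset.sum_congr rfl fun s _ => by ring
  -- final arithmetic
  have h1 : ε * (A * B) ≤ ε * (K * K) := by
    apply mul_le_mul_of_nonneg_left _ hε.le
    exact mul_le_mul hA hB hB0 hK0.le
  have hct : 0 ≤ c / t := div_nonneg hc.le ht.le
  have h2 : c / t * (RA * B) ≤ c / t * (RA * K) := by
    apply mul_le_mul_of_nonneg_left _ hct
    exact mul_le_mul_of_nonneg_left hB hRA0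
  have h3 : c / t * (A * RB) ≤ c / t * (K * RB) := by
    apply mul_le_mul_of_nonneg_left _ hct
    exact mul_le_mul_of_nonneg_right hA hRB0
  have hfinal : ε * (K * K) + c / t * (RA * K) + c / t * (K * RB)
      = ε * e ^ 2 / (e - 1) ^ 2 + c * e / ((e - 1) * t) * (RA + RB) := by
    rw [hK_def]
    field_simp
    ring
  calc spec ((∑ l, X l) * M * (∑ s, Y s))
      ≤ ∑ l, ∑ s, (ε + c * (((X l).rank : ℝ) + ((Y s).rank : ℝ)) / t) * a l * b s :=
        step1.trans step2
    _ = ε * (A * B) + c / t * (RA * B) + c / t * (A * RB) := key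
    _ ≤ ε * (K * K) + c / t * (RA * K) + c / t * (K * RB) := by linarith
    _ = _ := hfinal
end
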